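/- Let R be a (q,s) chain ring, μ an s-shape with m = μ_s, and κ an s-shape with κ ⪯ (n,…,n) and κ ⪯ μ. Then the map sending a matrix to its row span is a bijection between the set of matrices in row canonical form belonging to T_κ(R^{n×μ}) and the set of submodules of R^μ of shape κ. In particular, the number of row canonical forms in T_κ(R^{n×μ}) equals the number of submodules of R^μ of shape κ. -/

import Mathlib

open scoped BigOperators

section ChainRingDefs

variable {R : Type*} [CommRing R]

/-- For a shape `μ = (μ₁,…,μ_s)` (0-indexed as `μ : Fin s → ℕ`), the exponent of `π`
governing the `j`-th coordinate (0-indexed) of the module `R^μ`: the number of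
components of `μ` that are `≤ j`. -/
def shapeExp {s : ℕ} (μ : Fin s → ℕ) (j : ℕ) : ℕ :=
  (Finset.univ.filter fun i : Fin s => μ i ≤ j).card

/-- The last (largest) component `μ_s` of a shape (for monotone `μ`). -/
def shapeLast {s : ℕ} (μ : Fin s → ℕ) : ℕ := Finset.univ.sup μ

/-- The module `R^μ = ⟨1⟩^{μ₁} × ⟨π⟩^{μ₂−μ₁} × ⋯ × ⟨π^{s−1}⟩^{μ_s−μ_{s−1}}`,
realized as a submodule of `R^{μ_s}`. -/
def shapeModule (R : Type*) [CommRing R] (π : R) {s : ℕ} (μ : Fin s → ℕ) :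
    Submodule R (Fin (shapeLast μ) → R) :=
  Submodule.pi Set.univ fun j => Ideal.span {π ^ shapeExp μ (j : ℕ)}

/-- The module `M` has shape `μ`, i.e. `M ≅ R^μ`. -/
def HasShape (R : Type*) [CommRing R] (π : R) {s : ℕ} (μ : Fin s → ℕ)
    (M : Type*) [AddCommGroup M] [Module R M] : Prop :=
  Nonempty (M ≃ₗ[R] shapeModule R π μ)

/-- The row span of a matrix: the submodule of `R^m` generated by its rows. -/
def rowSpan (R : Type*) [CommRing R] {n m : ℕ} (A : Matrix (Fin n) (Fin m) R) :
    Submodule R (Fin m → R) :=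
  Submodule.span R (Set.range fun i => A i)

-- The degree of `a ∈ R`: the unique `l` with `a ∈ ⟨π^l⟩ \ ⟨π^{l+1}⟩` for `a ≠ 0`,
-- and `s` for `a = 0`.
open Classical in
noncomputable def degR (π : R) (s : ℕ) (a : R) : ℕ :=
  if a = 0 then s else sSup {l : ℕ | a ∈ Ideal.span {π ^ l}}

/-- `j` is the pivot position of the row `r`: the earliest entry among the entries of
least degree in that row. -/
def IsPivotIdx (π : R) (s : ℕ) {m : ℕ} (r : Fin m → R) (j : Fin m) : Prop :=
  (∀ k, degR π s (r j) ≤ degR π s (r k)) ∧ ∀ k, k < j → degR π s (r j) < degR π s (r k)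

/-- `V` is a complete set of residues modulo `π` containing `0`. -/
def IsCompleteResidues (π : R) (V : Set R) : Prop :=
  0 ∈ V ∧ ∀ a : R, ∃! v, v ∈ V ∧ a - v ∈ Ideal.span {π}

/-- The set `R(R,π^l) = {Σ_{i<l} a_i π^i : a_i ∈ V}` of residues modulo `π^l`. -/
def residueSet (π : R) (V : Set R) (l : ℕ) : Set R :=
  {x | ∃ a : Fin l → R, (∀ i, a i ∈ V) ∧ x = ∑ i, a i * π ^ (i : ℕ)}

/-- The matrix `A` is in row canonical form (with respect to the residue set `V`). -/
def IsRCF (π : R) (s : ℕ) (V : Set R) {n m : ℕ} (A : Matrix (Fin n) (Fin m) R) : Prop :=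
  -- (1) nonzero rows lie above zero rows
  (∀ i i' : Fin n, i < i' → A i' ≠ 0 → A i ≠ 0) ∧
  -- (2) pivots of smaller degree lie above pivots of larger degree; among pivots of
  -- equal degree, earlier pivots lie above later ones
  (∀ i i' : Fin n, ∀ j j' : Fin m, i < i' → A i ≠ 0 → A i' ≠ 0 →
      IsPivotIdx π s (A i) j → IsPivotIdx π s (A i') j' →
      degR π s (A i j) ≤ degR π s (A i' j') ∧
        (degR π s (A i j) = degR π s (A i' j') → j ≤ j')) ∧
  -- (3) every pivot equals `π^l` for some `0 ≤ l ≤ s-1`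
  (∀ i : Fin n, ∀ j : Fin m, A i ≠ 0 → IsPivotIdx π s (A i) j →
      degR π s (A i j) < s ∧ A i j = π ^ degR π s (A i j)) ∧
  -- (4) entries below a pivot in its column are zero; entries above lie in `R(R,π^l)`
  (∀ i : Fin n, ∀ j : Fin m, A i ≠ 0 → IsPivotIdx π s (A i) j →
      (∀ i' : Fin n, i < i' → A i' j = 0) ∧
      (∀ i' : Fin n, i' < i → A i' j ∈ residueSet π V (degR π s (A i j))))

/-- For a shape `κ` (0-indexed) and `i : Fin s`, the previous component `κ_{i-1}`
(`0` when `i = 0`); with the paper's 1-indexed convention this is `κ_i` for the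
0-indexed position `i` (whose 1-indexed position is `i+1`). -/
def prevVal {s : ℕ} (κ : Fin s → ℕ) (i : Fin s) : ℕ :=
  if (i : ℕ) = 0 then 0
  else κ ⟨(i : ℕ) - 1, lt_of_le_of_lt (Nat.sub_le _ _) i.isLt⟩

end ChainRingDefs



namespace RCFProof

variable {R : Type*} [CommRing R]

section Basic

variable {s : ℕ} {π : R}

lemma pow_ne_zero_of_lt (hnil' : π ^ (s-1) ≠ 0) {l : ℕ} (hl : l < s) : π ^ l ≠ 0 := by
  intro h
  apply hnil'
  have : s - 1 = l + (s - 1 - l) := by omega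
  rw [this, pow_add, h, zero_mul]

lemma span_pow_s (hnil : π ^ s = 0) {l : ℕ} (hl : s ≤ l) :
    Ideal.span {π ^ l} = ⊥ := by
  have : π ^ l = 0 := by
    have : l = s + (l - s) := by omega
    rw [this, pow_add, hnil, zero_mul]
  rw [this, Ideal.span_singleton_eq_bot.mpr rfl]

lemma pow_mem_span_pow_iff (hnil : π ^ s = 0) (hnil' : π ^ (s-1) ≠ 0)
    {t l : ℕ} (ht : t < s) (hl : l ≤ s) :
    π ^ t ∈ Ideal.span {π ^ l} ↔ l ≤ t := by
  constructor
  · intro h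
    by_contra hlt
    push_neg at hlt
    obtain ⟨c, hc⟩ := Ideal.mem_span_singleton'.mp h
    apply hnil'
    have h1 : π ^ (s-1) = π ^ (s-1-t) * π ^ t := by rw [← pow_add]; congr 1; omega
    rw [h1, ← hc]
    have h2 : π ^ (s - 1 - t) * (c * π ^ l) = c * π ^ (s-1-t+l) := by
      rw [show π ^ (s-1-t+l) = π ^ (s-1-t) * π ^ l from by rw [← pow_add]]; ring
    have h3 : π ^ (s-1-t+l) = π ^ (s-1-t+l-s) * π ^ s := by
      rw [← pow_add]; congr 1; omega
    rw [h2, h3, hnil, mul_zero, mul_zero]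
  · intro h
    exact Ideal.mem_span_singleton'.mpr ⟨π ^ (t - l), by rw [← pow_add]; congr 1; omega⟩

/-- Structure lemma: every nonzero element is a unit times a power of `π`. -/
lemma exists_unit_pow [IsLocalRing R]
    (hmax : IsLocalRing.maximalIdeal R = Ideal.span {π})
    (hnil : π ^ s = 0) {a : R} (ha : a ≠ 0) :
    ∃ (c : R) (t : ℕ), IsUnit c ∧ t < s ∧ a = c * π ^ t := by
  have hex : ∃ l, a ∉ Ideal.span {π ^ (l+1)} := by
    refine ⟨s, ?_⟩
    rw [span_pow_s hnil (by omega)]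
    simpa using ha
  classical
  set t := Nat.find hex with htdef
  have ht2 : a ∉ Ideal.span {π ^ (t+1)} := Nat.find_spec hex
  have ht1 : a ∈ Ideal.span {π ^ t} := by
    rcases Nat.eq_zero_or_pos t with h0 | h0
    · rw [h0, pow_zero, Ideal.span_singleton_one]; trivial
    · have := Nat.find_min hex (m := t - 1) (by omega)
      simpa [Nat.sub_add_cancel h0] using this
  obtain ⟨c, hc⟩ := Ideal.mem_span_singleton'.mp ht1
  have hcu : IsUnit c := by
    by_contra hcu
    have : c ∈ Ideal.span {π} := by
      rw [← hmax]; exact hcu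
    obtain ⟨d, hd⟩ := Ideal.mem_span_singleton'.mp this
    exact ht2 (Ideal.mem_span_singleton'.mpr ⟨d, by rw [← hc, ← hd]; ring⟩)
  have hts : t < s := by
    by_contra hts
    push_neg at hts
    apply ha
    rw [← hc]
    have : π ^ t = 0 := by
      have : t = s + (t - s) := by omega
      rw [this, pow_add, hnil, zero_mul]
    rw [this, mul_zero]
  exact ⟨c, t, hcu, hts, hc.symm⟩

lemma unit_mul_mem_span_iff {c : R} (hc : IsUnit c) {x : R} {I : Ideal R} :
    c * x ∈ I ↔ x ∈ I := by
  constructor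
  · intro h
    obtain ⟨u, rfl⟩ := hc
    have := I.smul_mem (↑u⁻¹) h
    simpa [smul_eq_mul, ← mul_assoc] using this
  · intro h; exact I.smul_mem c h

/-- Annihilator lemma: `π^l * x = 0 ↔ x ∈ ⟨π^{s-l}⟩`, for `l ≤ s`. -/
lemma ann_pow [IsLocalRing R]
    (hmax : IsLocalRing.maximalIdeal R = Ideal.span {π})
    (hnil : π ^ s = 0) (hnil' : π ^ (s-1) ≠ 0)
    {l : ℕ} (hl : l ≤ s) {x : R} :
    π ^ l * x = 0 ↔ x ∈ Ideal.span {π ^ (s - l)} := by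
  constructor
  · intro h
    rcases eq_or_ne x 0 with rfl | hx
    · exact Submodule.zero_mem _
    obtain ⟨c, t, hcu, hts, rfl⟩ := exists_unit_pow hmax hnil hx
    have hst : s - l ≤ t := by
      by_contra hlt
      push_neg at hlt
      apply pow_ne_zero_of_lt hnil' (show l + t < s by omega)
      have h2 : π ^ l * (c * π ^ t) = c * π ^ (l + t) := by rw [pow_add]; ring
      rw [h2] at h
      obtain ⟨u, rfl⟩ := hcu
      have := congrArg (fun y => (↑u⁻¹ : R) * y) h
      simpa [← mul_assoc] using this
    rw [unit_mul_mem_span_iff hcu]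
    exact (pow_mem_span_pow_iff hnil hnil' hts (by omega)).mpr hst
  · intro h
    obtain ⟨c, hc⟩ := Ideal.mem_span_singleton'.mp h
    rw [← hc]
    have : π ^ l * (c * π ^ (s - l)) = c * (π ^ (l + (s-l))) := by rw [pow_add]; ring
    rw [this, show l + (s-l) = s by omega, hnil, mul_zero]

end Basic

section Deg

variable {s : ℕ} {π : R}

lemma degR_zero : degR π s 0 = s := by simp [degR]

lemma degR_eq [IsLocalRing R]
    (hmax : IsLocalRing.maximalIdeal R = Ideal.span {π})
    (hnil : π ^ s = 0) (hnil' : π ^ (s-1) ≠ 0)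
    {c : R} {t : ℕ} (hc : IsUnit c) (ht : t < s) :
    degR π s (c * π ^ t) = t := by
  have hne : c * π ^ t ≠ 0 := by
    intro h
    obtain ⟨u, rfl⟩ := hc
    apply pow_ne_zero_of_lt hnil' ht
    have := congrArg (fun y => (↑u⁻¹ : R) * y) h
    simpa [← mul_assoc] using this
  rw [degR, if_neg hne]
  have hmem : t ∈ {l : ℕ | c * π ^ t ∈ Ideal.span {π ^ l}} :=
    Ideal.mem_span_singleton'.mpr ⟨c, rfl⟩
  have hub : ∀ l ∈ {l : ℕ | c * π ^ t ∈ Ideal.span {π ^ l}}, l ≤ t := by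
    intro l hle
    simp only [Set.mem_setOf_eq] at hle
    rw [unit_mul_mem_span_iff hc] at hle
    by_contra hlt
    push_neg at hlt
    rcases le_or_gt l s with hls | hls
    · exact absurd ((pow_mem_span_pow_iff hnil hnil' ht hls).mp hle) (by omega)
    · rw [span_pow_s hnil (le_of_lt hls)] at hle
      exact pow_ne_zero_of_lt hnil' ht (by simpa using hle)
  exact le_antisymm (csSup_le ⟨t, hmem⟩ hub) (le_csSup ⟨t, hub⟩ hmem)

lemma degR_lt_s [IsLocalRing R]
    (hmax : IsLocalRing.maximalIdeal R = Ideal.span {π})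
    (hnil : π ^ s = 0) (hnil' : π ^ (s-1) ≠ 0)
    {a : R} (ha : a ≠ 0) : degR π s a < s := by
  obtain ⟨c, t, hc, ht, rfl⟩ := exists_unit_pow hmax hnil ha
  rw [degR_eq hmax hnil hnil' hc ht]; exact ht

lemma mem_span_iff_le_degR [IsLocalRing R]
    (hmax : IsLocalRing.maximalIdeal R = Ideal.span {π})
    (hnil : π ^ s = 0) (hnil' : π ^ (s-1) ≠ 0)
    {a : R} {l : ℕ} (hl : l ≤ s) :
    a ∈ Ideal.span {π ^ l} ↔ l ≤ degR π s a := by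
  rcases eq_or_ne a 0 with rfl | ha
  · simp [degR_zero, hl]
  obtain ⟨c, t, hc, ht, rfl⟩ := exists_unit_pow hmax hnil ha
  rw [degR_eq hmax hnil hnil' hc ht, unit_mul_mem_span_iff hc,
    pow_mem_span_pow_iff hnil hnil' ht hl]

lemma degR_pow [IsLocalRing R]
    (hmax : IsLocalRing.maximalIdeal R = Ideal.span {π})
    (hnil : π ^ s = 0) (hnil' : π ^ (s-1) ≠ 0)
    {t : ℕ} (ht : t < s) : degR π s (π ^ t) = t := by
  simpa using degR_eq hmax hnil hnil' isUnit_one ht (c := 1)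

/-- Cancellation: if `π * x ∈ ⟨π^{l+1}⟩` and `l + 1 ≤ s` then `x ∈ ⟨π^l⟩`. -/
lemma mem_span_of_mul_mem [IsLocalRing R]
    (hmax : IsLocalRing.maximalIdeal R = Ideal.span {π})
    (hnil : π ^ s = 0) (hnil' : π ^ (s-1) ≠ 0)
    {x : R} {l : ℕ} (hl : l + 1 ≤ s) (h : π * x ∈ Ideal.span {π ^ (l+1)}) :
    x ∈ Ideal.span {π ^ l} := by
  rcases eq_or_ne x 0 with rfl | hx
  · exact Submodule.zero_mem _
  obtain ⟨c, t, hc, ht, rfl⟩ := exists_unit_pow hmax hnil hx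
  rw [unit_mul_mem_span_iff hc, pow_mem_span_pow_iff hnil hnil' ht (by omega)]
  rcases Nat.lt_or_ge t l with hlt | hge
  · exfalso
    have h1 : π * (c * π ^ t) = c * π ^ (t+1) := by rw [pow_succ]; ring
    rw [h1, unit_mul_mem_span_iff hc] at h
    have := (pow_mem_span_pow_iff hnil hnil' (show t+1 < s by omega) hl).mp h
    omega
  · exact hge

end Deg


section Residue

variable {s : ℕ} {π : R} {V : Set R}

lemma sum_shift {l : ℕ} (f : Fin l → R) :
    π * ∑ i : Fin l, f i * π ^ (i : ℕ) = ∑ i : Fin l, f i * π ^ ((i : ℕ) + 1) := by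
  rw [Finset.mul_sum]
  exact Finset.sum_congr rfl fun i _ => by ring

lemma residue_succ_decomp {l : ℕ} {x : R} (hx : x ∈ residueSet π V (l+1)) :
    ∃ v τ, v ∈ V ∧ τ ∈ residueSet π V l ∧ x = v + π * τ := by
  obtain ⟨a, ha, rfl⟩ := hx
  refine ⟨a 0, ∑ i : Fin l, a i.succ * π ^ (i : ℕ), ha 0, ⟨fun i => a i.succ, fun i => ha _, rfl⟩, ?_⟩
  rw [sum_shift, Fin.sum_univ_succ]
  simp [Fin.val_succ]

lemma exists_residue (hV : IsCompleteResidues π V) (l : ℕ) (a : R) :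
    ∃ ρ ∈ residueSet π V l, a - ρ ∈ Ideal.span {π ^ l} := by
  induction l generalizing a with
  | zero =>
    refine ⟨0, ⟨fun i => i.elim0, fun i => i.elim0, by simp⟩, ?_⟩
    simp [Ideal.span_singleton_one]
  | succ l ih =>
    obtain ⟨v₀, ⟨hv₀V, hv₀⟩, _⟩ := hV.2 a
    obtain ⟨b, hb⟩ := Ideal.mem_span_singleton'.mp hv₀
    obtain ⟨ρb, ⟨ab, hab, rfl⟩, hρb⟩ := ih b
    obtain ⟨c, hc⟩ := Ideal.mem_span_singleton'.mp hρb
    refine ⟨v₀ + π * ∑ i : Fin l, ab i * π ^ (i : ℕ),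
      ⟨Fin.cons v₀ ab, ?_, ?_⟩, ?_⟩
    · intro i
      refine Fin.cases ?_ ?_ i
      · simpa using hv₀V
      · intro k; simpa using hab k
    · rw [sum_shift, Fin.sum_univ_succ]
      simp [Fin.val_succ]
    · have h1 : a - (v₀ + π * ∑ i : Fin l, ab i * π ^ (i : ℕ))
          = π * (b - ∑ i : Fin l, ab i * π ^ (i : ℕ)) := by
        linear_combination -hb
      rw [h1, ← hc]
      exact Ideal.mem_span_singleton'.mpr ⟨c, by rw [pow_succ]; ring⟩

lemma residue_unique [IsLocalRing R]
    (hmax : IsLocalRing.maximalIdeal R = Ideal.span {π})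
    (hnil : π ^ s = 0) (hnil' : π ^ (s-1) ≠ 0)
    (hV : IsCompleteResidues π V) :
    ∀ l ≤ s, ∀ x y : R, x ∈ residueSet π V l → y ∈ residueSet π V l →
      x - y ∈ Ideal.span {π ^ l} → x = y := by
  intro l
  induction l with
  | zero =>
    rintro - x y ⟨a, -, rfl⟩ ⟨b, -, rfl⟩ -
    simp
  | succ l ih =>
    intro hl x y hx hy hxy
    obtain ⟨v, τ, hvV, hτ, rfl⟩ := residue_succ_decomp hx
    obtain ⟨w, σ, hwV, hσ, rfl⟩ := residue_succ_decomp hy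
    have hsub : v + π * τ - (w + π * σ) = (v - w) + π * (τ - σ) := by ring
    have hπ : Ideal.span {π ^ (l+1)} ≤ Ideal.span {π} := by
      exact Ideal.span_singleton_le_span_singleton.mpr (dvd_pow_self π (Nat.succ_ne_zero l))
    have hvw : v - w ∈ Ideal.span {π} := by
      have h2 : v - w = (v + π * τ - (w + π * σ)) - π * (τ - σ) := by ring
      rw [h2]
      refine Submodule.sub_mem _ (hπ hxy) ?_
      exact Ideal.mem_span_singleton'.mpr ⟨τ - σ, by ring⟩
    have hveq : v = w := by
      obtain ⟨u, hu, huniq⟩ := hV.2 v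
      have h1 : v = u := huniq v ⟨hvV, by simp⟩
      have h2 : w = u := huniq w ⟨hwV, hvw⟩
      rw [h1, h2]
    subst hveq
    have hτσ : τ - σ ∈ Ideal.span {π ^ l} := by
      apply mem_span_of_mul_mem hmax hnil hnil' hl
      have h3 : π * (τ - σ) = v + π * τ - (v + π * σ) := by ring
      rw [h3]; exact hxy
    rw [ih (by omega) τ σ hτ hσ hτσ]

end Residue

section Pivot

variable {s : ℕ} {π : R} {m : ℕ}

lemma pivot_unique {r : Fin m → R} {j j' : Fin m}
    (h : IsPivotIdx π s r j) (h' : IsPivotIdx π s r j') : j = j' := by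
  rcases lt_trichotomy j j' with hlt | heq | hgt
  · exact absurd (h'.2 j hlt) (not_lt.mpr (h.1 j'))
  · exact heq
  · exact absurd (h.2 j' hgt) (not_lt.mpr (h'.1 j))

lemma pivot_exists {r : Fin m → R} (hr : r ≠ 0) : ∃ j, IsPivotIdx π s r j := by
  classical
  have hk : ∃ k, r k ≠ 0 := by
    by_contra h
    push_neg at h
    exact hr (funext fun k => h k)
  obtain ⟨k, hk⟩ := hk
  obtain ⟨j₀, -, hj₀⟩ := Finset.exists_min_image Finset.univ
    (fun j => degR π s (r j)) ⟨k, Finset.mem_univ k⟩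
  set S := Finset.univ.filter (fun j => degR π s (r j) = degR π s (r j₀)) with hS
  have hSne : S.Nonempty := ⟨j₀, by simp [hS]⟩
  refine ⟨S.min' hSne, ?_, ?_⟩
  · have : S.min' hSne ∈ S := S.min'_mem hSne
    simp only [hS, Finset.mem_filter] at this
    intro k'
    rw [this.2]
    exact hj₀ k' (Finset.mem_univ _)
  · intro k' hk'
    have hmem : S.min' hSne ∈ S := S.min'_mem hSne
    simp only [hS, Finset.mem_filter] at hmem
    rw [hmem.2]
    rcases eq_or_lt_of_le (hj₀ k' (Finset.mem_univ _)) with he | hlt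
    · exfalso
      have : k' ∈ S := by simp [hS, ← he]
      exact absurd (S.min'_le k' this) (not_le.mpr hk')
    · exact hlt

end Pivot

section Counting

lemma card_eq_ker_mul_range {X Y : Type*} [AddCommGroup X] [Module R X]
    [AddCommGroup Y] [Module R Y] (f : X →ₗ[R] Y) :
    Nat.card X = Nat.card (LinearMap.ker f) * Nat.card (LinearMap.range f) := by
  have h1 : Nat.card X = Nat.card (X ⧸ LinearMap.ker f) * Nat.card (LinearMap.ker f) :=
    AddSubgroup.card_eq_card_quotient_mul_card_addSubgroup (LinearMap.ker f).toAddSubgroup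
  have h2 : Nat.card (X ⧸ LinearMap.ker f) = Nat.card (LinearMap.range f) :=
    Nat.card_congr f.quotKerEquivRange.toEquiv
  rw [h1, h2, mul_comm]

end Counting

section IdealCard

variable [Fintype R] [IsLocalRing R] {q s : ℕ} {π : R}

lemma range_lsmul (c : R) : LinearMap.range (LinearMap.lsmul R R c) = Ideal.span {c} := by
  apply le_antisymm
  · rintro x ⟨y, rfl⟩
    exact Ideal.mem_span_singleton'.mpr ⟨y, by simp [LinearMap.lsmul_apply, smul_eq_mul, mul_comm]⟩
  · rw [Ideal.span_singleton_le_iff_mem]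
    exact ⟨1, by simp⟩

lemma ker_lsmul_pow (hmax : IsLocalRing.maximalIdeal R = Ideal.span {π})
    (hnil : π ^ s = 0) (hnil' : π ^ (s-1) ≠ 0) {l : ℕ} (hl : l ≤ s) :
    LinearMap.ker (LinearMap.lsmul R R (π ^ l)) = Ideal.span {π ^ (s - l)} := by
  ext x
  rw [LinearMap.mem_ker, LinearMap.lsmul_apply, smul_eq_mul]
  exact ann_pow hmax hnil hnil' hl

lemma card_top_submodule (X : Type*) [AddCommGroup X] [Module R X] :
    Nat.card (⊤ : Submodule R X) = Nat.card X :=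
  Nat.card_congr (Submodule.topEquiv (R := R) (M := X)).toEquiv

lemma cardR_lagrange (hmax : IsLocalRing.maximalIdeal R = Ideal.span {π})
    (hq : Nat.card (IsLocalRing.ResidueField R) = q) :
    Nat.card R = Nat.card (Ideal.span {π}) * q := by
  have h := card_eq_ker_mul_range (R := R) (IsLocalRing.maximalIdeal R).mkQ
  rw [Submodule.ker_mkQ, Submodule.range_mkQ, card_top_submodule] at h
  have hres : Nat.card (R ⧸ IsLocalRing.maximalIdeal R) = q := hq
  rw [h, hres, hmax]

lemma cardI_bot (hnil : π ^ s = 0) : Nat.card (Ideal.span {π ^ s}) = 1 := by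
  rw [span_pow_s hnil le_rfl]
  have : Nat.card (⊥ : Ideal R) = Nat.card PUnit.{1} :=
    Nat.card_congr (Submodule.botEquivPUnit (R := R) (M := R)).toEquiv
  simpa using this

lemma cardI_pos {l : ℕ} : 0 < Nat.card (Ideal.span {π ^ l}) :=
  Nat.card_pos

lemma cardI_step (hmax : IsLocalRing.maximalIdeal R = Ideal.span {π})
    (hnil : π ^ s = 0) (hnil' : π ^ (s-1) ≠ 0) {l : ℕ} (hl : l + 1 ≤ s) :
    Nat.card (Ideal.span {π ^ l}) =
      Nat.card (Ideal.span {π ^ (s-1)}) * Nat.card (Ideal.span {π ^ (l+1)}) := by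
  set f := (LinearMap.lsmul R R π).comp (Ideal.span {π ^ l}).subtype with hf
  have h := card_eq_ker_mul_range (R := R) f
  have hker : LinearMap.ker f =
      Submodule.comap (Ideal.span {π ^ l}).subtype (Ideal.span {π ^ (s-1)}) := by
    rw [hf, LinearMap.ker_comp]
    congr 1
    simpa using ker_lsmul_pow hmax hnil hnil' (show (1:ℕ) ≤ s by omega)
  have hle : Ideal.span {π ^ (s-1)} ≤ Ideal.span {π ^ l} :=
    Ideal.span_singleton_le_span_singleton.mpr (pow_dvd_pow π (by omega))
  have hkcard : Nat.card (LinearMap.ker f) = Nat.card (Ideal.span {π ^ (s-1)}) := by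
    rw [hker]
    exact Nat.card_congr (Submodule.comapSubtypeEquivOfLe hle).toEquiv
  have hrange : LinearMap.range f = Ideal.span {π ^ (l+1)} := by
    apply le_antisymm
    · rintro x ⟨⟨y, hy⟩, rfl⟩
      obtain ⟨c, hc⟩ := Ideal.mem_span_singleton'.mp hy
      refine Ideal.mem_span_singleton'.mpr ⟨c, ?_⟩
      simp only [hf, LinearMap.comp_apply, Submodule.coe_subtype, LinearMap.lsmul_apply,
        smul_eq_mul]
      rw [← hc, pow_succ]; ring
    · rw [Ideal.span_singleton_le_iff_mem]
      refine ⟨⟨π ^ l, Ideal.mem_span_singleton'.mpr ⟨1, one_mul _⟩⟩, ?_⟩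
      simp only [hf, LinearMap.comp_apply, Submodule.coe_subtype, LinearMap.lsmul_apply,
        smul_eq_mul]
      rw [pow_succ]; ring
  calc Nat.card (Ideal.span {π ^ l})
      = Nat.card (LinearMap.ker f) * Nat.card (LinearMap.range f) := h
    _ = _ := by rw [hkcard, hrange]

lemma cardI_pow_eq (hs : 0 < s) (hmax : IsLocalRing.maximalIdeal R = Ideal.span {π})
    (hnil : π ^ s = 0) (hnil' : π ^ (s-1) ≠ 0)
    (hq : Nat.card (IsLocalRing.ResidueField R) = q) :
    ∀ l ≤ s, Nat.card (Ideal.span {π ^ l}) = q ^ (s - l) := by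
  have claimA : ∀ k ≤ s, Nat.card (Ideal.span {π ^ (s-k)}) =
      Nat.card (Ideal.span {π ^ (s-1)}) ^ k := by
    intro k
    induction k with
    | zero => intro _; simpa using cardI_bot hnil
    | succ k ih =>
      intro hk
      have h1 : s - (k+1) + 1 = s - k := by omega
      rw [cardI_step hmax hnil hnil' (by omega), h1, ih (by omega), pow_succ]
      ring
  have hc0 : Nat.card (Ideal.span {π ^ (0:ℕ)}) = Nat.card R := by
    rw [pow_zero, Ideal.span_singleton_one]
    exact card_top_submodule R
  have hcsq : Nat.card (Ideal.span {π ^ (s-1)}) = q := by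
    have h1 : Nat.card R = Nat.card (Ideal.span {π ^ (s-1)}) ^ s := by
      rw [← hc0, show (0:ℕ) = s - s by omega]
      exact claimA s le_rfl
    have h2 : Nat.card R = Nat.card (Ideal.span {π ^ (s-1)}) ^ (s-1) * q := by
      have := cardR_lagrange hmax hq
      rw [this, show Ideal.span {π} = Ideal.span {π ^ (s - (s-1))} by
        rw [show s - (s-1) = 1 by omega, pow_one]]
      rw [claimA (s-1) (by omega)]
    have h3 : Nat.card (Ideal.span {π ^ (s-1)}) ^ (s-1) *
        Nat.card (Ideal.span {π ^ (s-1)}) =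
        Nat.card (Ideal.span {π ^ (s-1)}) ^ (s-1) * q := by
      rw [← pow_succ, show s - 1 + 1 = s by omega, ← h1, h2]
    exact Nat.eq_of_mul_eq_mul_left (pow_pos cardI_pos _) h3
  intro l hl
  have := claimA (s - l) (by omega)
  rw [show s - (s - l) = l by omega, hcsq] at this
  exact this

lemma q_pos (hq : Nat.card (IsLocalRing.ResidueField R) = q) : 0 < q := by
  rw [← hq]
  have : Finite (IsLocalRing.ResidueField R) := Quotient.finite _
  exact Nat.card_pos

end IdealCard

section Pmap

variable (π : R)

def pmulMap (X : Type*) [AddCommGroup X] [Module R X] : X →ₗ[R] X := π • LinearMap.id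

lemma pmulMap_apply {X : Type*} [AddCommGroup X] [Module R X] (x : X) :
    pmulMap π X x = π • x := rfl

variable {X Y : Type*} [AddCommGroup X] [Module R X] [AddCommGroup Y] [Module R Y]

lemma card_map_pmul (N : Submodule R X) :
    Nat.card (Submodule.map (pmulMap π X) N) =
      Nat.card (LinearMap.range (pmulMap π ↥N)) := by
  have h1 : Submodule.map (pmulMap π X) N =
      LinearMap.range ((pmulMap π X).comp N.subtype) := by
    rw [LinearMap.range_comp, Submodule.range_subtype]
  have h2 : (pmulMap π X).comp N.subtype = N.subtype.comp (pmulMap π ↥N) := by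
    ext x; rfl
  rw [h1, h2, LinearMap.range_comp]
  exact (Nat.card_congr (Submodule.equivMapOfInjective N.subtype
    (Submodule.injective_subtype N) _).toEquiv).symm

lemma card_range_pmul_congr {N : Submodule R X} {N' : Submodule R Y}
    (e : ↥N ≃ₗ[R] ↥N') :
    Nat.card (LinearMap.range (pmulMap π ↥N)) =
      Nat.card (LinearMap.range (pmulMap π ↥N')) := by
  have hcomm : (e.toLinearMap).comp (pmulMap π ↥N) =
      (pmulMap π ↥N').comp e.toLinearMap := by
    ext x
    simp [pmulMap_apply, map_smul]
  have h : Submodule.map e.toLinearMap (LinearMap.range (pmulMap π ↥N)) =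
      LinearMap.range (pmulMap π ↥N') := by
    rw [← LinearMap.range_comp, hcomm, LinearMap.range_comp, LinearEquiv.range,
      Submodule.map_top]
  rw [← h]
  exact Nat.card_congr (Submodule.equivMapOfInjective e.toLinearMap e.injective _).toEquiv

lemma card_map_pmul_congr {N : Submodule R X} {N' : Submodule R Y}
    (e : ↥N ≃ₗ[R] ↥N') :
    Nat.card (Submodule.map (pmulMap π X) N) =
      Nat.card (Submodule.map (pmulMap π Y) N') := by
  rw [card_map_pmul, card_map_pmul, card_range_pmul_congr π e]

end Pmap

section ShapeCard

variable {q s : ℕ} {π : R}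

lemma shapeExp_le {κ : Fin s → ℕ} (j : ℕ) : shapeExp κ j ≤ s := by
  classical
  calc (Finset.univ.filter fun i : Fin s => κ i ≤ j).card
      ≤ Finset.univ.card := Finset.card_filter_le _ _
    _ = s := by simp

lemma shapeExp_lt (hs : 0 < s) {κ : Fin s → ℕ} {j : ℕ} (hj : j < shapeLast κ) :
    shapeExp κ j < s := by
  classical
  have : Nonempty (Fin s) := ⟨⟨0, hs⟩⟩
  obtain ⟨i, -, hi⟩ := Finset.exists_mem_eq_sup Finset.univ Finset.univ_nonempty κ
  have hiκ : ¬ κ i ≤ j := by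
    rw [shapeLast] at hj; omega
  have hsub : (Finset.univ.filter fun i : Fin s => κ i ≤ j) ⊂ Finset.univ := by
    refine ⟨Finset.subset_univ _, fun hsup => ?_⟩
    exact hiκ (Finset.mem_filter.mp (hsup (Finset.mem_univ i))).2
  have := Finset.card_lt_card hsub
  simpa [shapeExp] using this

def piSubEquiv {k : ℕ} (I : Fin k → Ideal R) :
    ↥(Submodule.pi Set.univ I) ≃ (∀ j, ↥(I j)) where
  toFun x j := ⟨x.1 j, x.2 j (Set.mem_univ j)⟩
  invFun y := ⟨fun j => (y j).1, fun j _ => (y j).2⟩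
  left_inv x := by ext j; rfl
  right_inv y := by ext j; rfl

lemma card_pi_submodule {k : ℕ} (I : Fin k → Ideal R) :
    Nat.card (Submodule.pi Set.univ I) = ∏ j, Nat.card (I j) := by
  rw [Nat.card_congr (piSubEquiv I)]
  exact Nat.card_pi

lemma map_pmul_pi {k : ℕ} (e : Fin k → ℕ) :
    Submodule.map (pmulMap π (Fin k → R))
        (Submodule.pi Set.univ fun j => Ideal.span {π ^ e j}) =
      Submodule.pi Set.univ fun j => Ideal.span {π ^ (e j + 1)} := by
  apply le_antisymm
  · rintro x ⟨y, hy, rfl⟩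
    intro j _
    obtain ⟨c, hc⟩ := Ideal.mem_span_singleton'.mp (hy j (Set.mem_univ j))
    refine Ideal.mem_span_singleton'.mpr ⟨c, ?_⟩
    rw [pmulMap_apply]
    simp only [Pi.smul_apply, smul_eq_mul]
    rw [← hc, pow_succ]; ring
  · intro x hx
    have hch : ∀ j, ∃ c, c * π ^ (e j + 1) = x j :=
      fun j => Ideal.mem_span_singleton'.mp (hx j (Set.mem_univ j))
    choose c hc using hch
    refine ⟨fun j => c j * π ^ e j, fun j _ => Ideal.mem_span_singleton'.mpr ⟨c j, rfl⟩, ?_⟩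
    funext j
    rw [pmulMap_apply]
    simp only [Pi.smul_apply, smul_eq_mul]
    rw [← hc j, pow_succ]; ring

lemma shape_smallness [Fintype R] [IsLocalRing R]
    (hs : 0 < s) (hmax : IsLocalRing.maximalIdeal R = Ideal.span {π})
    (hnil : π ^ s = 0) (hnil' : π ^ (s-1) ≠ 0)
    (hq : Nat.card (IsLocalRing.ResidueField R) = q)
    {n : ℕ} {κ : Fin s → ℕ} (hκn : ∀ i, κ i ≤ n)
    {m : ℕ} (M : Submodule R (Fin m → R)) (hsh : HasShape R π κ ↥M) :
    Nat.card M ≤ q ^ n * Nat.card (Submodule.map (pmulMap π (Fin m → R)) M) := by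
  obtain ⟨e⟩ := hsh
  have card1 : Nat.card M = Nat.card (shapeModule R π κ) := Nat.card_congr e.toEquiv
  have card2 : Nat.card (Submodule.map (pmulMap π (Fin m → R)) M) =
      Nat.card (Submodule.map (pmulMap π (Fin (shapeLast κ) → R)) (shapeModule R π κ)) :=
    card_map_pmul_congr π e
  have hlt : ∀ j : Fin (shapeLast κ), shapeExp κ (j : ℕ) < s := fun j => shapeExp_lt hs j.2
  have hc1 : Nat.card (shapeModule R π κ) =
      ∏ j : Fin (shapeLast κ), q ^ (s - shapeExp κ (j : ℕ)) := by
    rw [shapeModule, card_pi_submodule]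
    exact Finset.prod_congr rfl fun j _ =>
      cardI_pow_eq hs hmax hnil hnil' hq _ (shapeExp_le _)
  have hc2 : Nat.card (Submodule.map (pmulMap π (Fin (shapeLast κ) → R))
      (shapeModule R π κ)) =
      ∏ j : Fin (shapeLast κ), q ^ (s - shapeExp κ (j : ℕ) - 1) := by
    rw [shapeModule, map_pmul_pi, card_pi_submodule]
    refine Finset.prod_congr rfl fun j _ => ?_
    rw [cardI_pow_eq hs hmax hnil hnil' hq _ (by have := hlt j; omega)]
    congr 1
  have hkn : shapeLast κ ≤ n := Finset.sup_le fun i _ => hκn i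
  have hq1 : 1 ≤ q := q_pos hq
  calc Nat.card M = ∏ j : Fin (shapeLast κ), q ^ (s - shapeExp κ (j : ℕ)) := by
        rw [card1, hc1]
    _ = ∏ j : Fin (shapeLast κ), (q * q ^ (s - shapeExp κ (j : ℕ) - 1)) := by
        refine Finset.prod_congr rfl fun j _ => ?_
        rw [← pow_succ']
        congr 1
        have := hlt j; omega
    _ = q ^ (shapeLast κ) * ∏ j : Fin (shapeLast κ), q ^ (s - shapeExp κ (j : ℕ) - 1) := by
        rw [Finset.prod_mul_distrib, Finset.prod_const]
        congr 2
        simp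
    _ ≤ q ^ n * ∏ j : Fin (shapeLast κ), q ^ (s - shapeExp κ (j : ℕ) - 1) := by
        apply Nat.mul_le_mul_right
        exact Nat.pow_le_pow_right hq1 hkn
    _ = q ^ n * Nat.card (Submodule.map (pmulMap π (Fin m → R)) M) := by
        rw [card2, hc2]

end ShapeCard

section Core

variable {q s : ℕ} {π : R} {V : Set R} {m : ℕ}

lemma smul_row_zero (hnil : π ^ s = 0) {d : ℕ} (hd : d ≤ s) {w : Fin m → R}
    (hw : ∀ k, w k ∈ Ideal.span {π ^ d}) : π ^ (s - d) • w = 0 := by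
  funext k
  obtain ⟨c, hc⟩ := Ideal.mem_span_singleton'.mp (hw k)
  show π ^ (s-d) • w k = 0
  rw [smul_eq_mul, ← hc, show π ^ (s-d) * (c * π ^ d) = c * π ^ (s - d + d) from by
    rw [pow_add]; ring, show s - d + d = s by omega, hnil, mul_zero]

lemma exists_pivot_data [IsLocalRing R] (hs : 0 < s)
    (hmax : IsLocalRing.maximalIdeal R = Ideal.span {π})
    (hnil : π ^ s = 0)
    (M : Submodule R (Fin m → R)) (hM : M ≠ ⊥) :
    ∃ (d : ℕ) (j : Fin m) (v : Fin m → R), d < s ∧ v ∈ M ∧ v j = π ^ d ∧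
      (∀ w ∈ M, ∀ k, w k ∈ Ideal.span {π ^ d}) ∧
      (∀ w ∈ M, ∀ k, k < j → w k ∈ Ideal.span {π ^ (d+1)}) := by
  classical
  set P : ℕ → Prop := fun l => ∀ w ∈ M, ∀ k, w k ∈ Ideal.span {π ^ l} with hP
  have hP0 : P 0 := by
    intro w _ k
    rw [pow_zero, Ideal.span_singleton_one]
    trivial
  have hPs : ¬ P s := by
    intro h
    apply hM
    rw [Submodule.eq_bot_iff]
    intro w hw
    funext k
    have := h w hw k
    rw [span_pow_s hnil le_rfl] at this
    simpa using this
  have hex : ∃ l, ¬ P l := ⟨s, hPs⟩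
  have hd'pos : Nat.find hex ≠ 0 := by
    intro h
    exact (Nat.find_spec hex) (h ▸ hP0)
  set d := Nat.find hex - 1 with hd
  have hd1 : d + 1 = Nat.find hex := by omega
  have hPd : P d := by
    by_contra h
    exact absurd (Nat.find_min' hex h) (by omega)
  have hnPd1 : ¬ P (d+1) := hd1 ▸ Nat.find_spec hex
  have hds : d + 1 ≤ s := hd1 ▸ Nat.find_min' hex hPs
  simp only [hP] at hnPd1
  push_neg at hnPd1
  obtain ⟨w, hw, k, hk⟩ := hnPd1
  have hexj : ∃ jn : ℕ, ∃ hj : jn < m, ∃ w ∈ M, w ⟨jn, hj⟩ ∉ Ideal.span {π ^ (d+1)} :=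
    ⟨k.1, k.2, w, hw, by simpa using hk⟩
  set jn := Nat.find hexj with hjn
  obtain ⟨hjm, w', hw', hw'j⟩ := Nat.find_spec hexj
  set j : Fin m := ⟨jn, hjm⟩ with hj
  have hcol : ∀ u ∈ M, ∀ k : Fin m, k < j → u k ∈ Ideal.span {π ^ (d+1)} := by
    intro u hu k hkj
    by_contra hcon
    exact Nat.find_min hexj (show k.1 < jn from hkj) ⟨k.2, u, hu, by simpa using hcon⟩
  obtain ⟨c, hc⟩ := Ideal.mem_span_singleton'.mp (hPd w' hw' j)
  have hcu : IsUnit c := by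
    by_contra hcu
    apply hw'j
    have hcmem : c ∈ Ideal.span {π} := by rw [← hmax]; exact hcu
    obtain ⟨b, hb⟩ := Ideal.mem_span_singleton'.mp hcmem
    refine Ideal.mem_span_singleton'.mpr ⟨b, ?_⟩
    rw [← hc, ← hb, pow_succ]
    ring
  refine ⟨d, j, (↑hcu.unit⁻¹ : R) • w', by omega, M.smul_mem _ hw', ?_, hPd, hcol⟩
  show (↑hcu.unit⁻¹ : R) * w' j = π ^ d
  rw [← hc, ← mul_assoc, show (↑hcu.unit⁻¹ : R) * c = 1 from by
    nth_rewrite 2 [← IsUnit.unit_spec hcu]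
    exact Units.inv_mul _, one_mul]

lemma rows_zero_of_first_zero {t : ℕ} {B : Matrix (Fin (t+1)) (Fin m) R}
    (hB : IsRCF π s V B) (hB0 : B 0 = 0) : ∀ k, B k = 0 := by
  intro k
  by_contra hk
  have h0k : (0 : Fin (t+1)) < k := Fin.pos_of_ne_zero (by rintro rfl; exact hk hB0)
  exact (hB.1 0 k h0k hk) hB0

lemma isRCF_tail {t : ℕ} {B : Matrix (Fin (t+1)) (Fin m) R} (h : IsRCF π s V B) :
    IsRCF π s V (Matrix.of fun k : Fin t => B k.succ) := by
  obtain ⟨h1, h2, h3, h4⟩ := h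
  refine ⟨?_, ?_, ?_, ?_⟩
  · intro i i' hii' hne
    exact h1 i.succ i'.succ (by simpa using hii') hne
  · intro i i' j j' hii' hne hne' hp hp'
    exact h2 i.succ i'.succ j j' (by simpa using hii') hne hne' hp hp'
  · intro i j hne hp
    exact h3 i.succ j hne hp
  · intro i j hne hp
    obtain ⟨hb, ha⟩ := h4 i.succ j hne hp
    constructor
    · intro i' hii'
      exact hb i'.succ (by simpa using hii')
    · intro i' hii'
      exact ha i'.succ (by simpa using hii')

lemma reduce [IsLocalRing R]
    (hmax : IsLocalRing.maximalIdeal R = Ideal.span {π})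
    (hnil : π ^ s = 0) (hnil' : π ^ (s-1) ≠ 0)
    (hV : IsCompleteResidues π V) :
    ∀ t (B : Matrix (Fin t) (Fin m) R), IsRCF π s V B → ∀ v : Fin m → R,
      ∃ c : Fin t → R, ∀ k, B k ≠ 0 → ∀ jk, IsPivotIdx π s (B k) jk →
        (v - ∑ i, c i • B i) jk ∈ residueSet π V (degR π s (B k jk)) := by
  intro t
  induction t with
  | zero =>
    intro B _ v
    exact ⟨fun _ => (0:R), fun k => k.elim0⟩
  | succ t ih =>
    intro B hB v
    rcases eq_or_ne (B 0) 0 with hB0 | hB0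
    · refine ⟨fun _ => (0:R), fun k hk => ?_⟩
      exact absurd (rows_zero_of_first_zero hB hB0 k) hk
    · obtain ⟨j₀, hj₀⟩ := pivot_exists (π := π) (s := s) hB0
      obtain ⟨hl₀s, hBj₀⟩ := hB.2.2.1 0 j₀ hB0 hj₀
      set l₀ := degR π s (B 0 j₀) with hl₀
      obtain ⟨ρ, hρmem, hρ⟩ := exists_residue hV l₀ (v j₀)
      obtain ⟨c₀, hc₀⟩ := Ideal.mem_span_singleton'.mp hρ
      obtain ⟨c', hc'⟩ := ih (Matrix.of fun k : Fin t => B k.succ) (isRCF_tail hB)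
        (v - c₀ • B 0)
      refine ⟨Fin.cons (α := fun _ => R) c₀ c', ?_⟩
      have hsum : v - ∑ i, Fin.cons (α := fun _ => R) c₀ c' i • B i
          = (v - c₀ • B 0) - ∑ k : Fin t, c' k • B k.succ := by
        rw [Fin.sum_univ_succ]
        simp only [Fin.cons_zero, Fin.cons_succ]
        abel
      intro k
      refine Fin.cases ?_ ?_ k
      · intro hne jk hpk
        have hjk : jk = j₀ := pivot_unique hpk hj₀
        subst hjk
        rw [hsum]
        have hzero : ∀ k' : Fin t, B k'.succ jk = 0 := by
          intro k'
          exact (hB.2.2.2 0 jk hB0 hj₀).1 k'.succ (Fin.succ_pos k')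
        have : ((v - c₀ • B 0) - ∑ k' : Fin t, c' k' • B k'.succ) jk = ρ := by
          simp only [Pi.sub_apply, Finset.sum_apply, Pi.smul_apply, smul_eq_mul]
          rw [Finset.sum_eq_zero (fun k' _ => by rw [hzero k', mul_zero]), hBj₀, hc₀]
          ring
        rw [this]
        exact hρmem
      · intro k' hne jk hpk
        rw [hsum]
        exact hc' k' hne jk hpk

end Core

section Exists

variable {q s : ℕ} {π : R} {V : Set R} {m : ℕ}

lemma isRCF_zero {t : ℕ} : IsRCF π s V (0 : Matrix (Fin t) (Fin m) R) := by
  refine ⟨?_, ?_, ?_, ?_⟩ <;> intro i <;>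
    first
      | (intro i' h h'; exact absurd rfl h')
      | (intro j h h'; exact absurd rfl h)
      | (intro i' j j' h h1 h2; exact absurd rfl h1)

lemma rowSpan_zero {t : ℕ} : rowSpan R (0 : Matrix (Fin t) (Fin m) R) = ⊥ := by
  apply le_antisymm _ bot_le
  rw [rowSpan, Submodule.span_le]
  rintro x ⟨i, rfl⟩
  exact (Submodule.mem_bot R).mpr rfl

lemma row_mem_rowSpan {t : ℕ} (A : Matrix (Fin t) (Fin m) R) (i : Fin t) :
    A i ∈ rowSpan R A :=
  Submodule.subset_span ⟨i, rfl⟩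

theorem rcf_exists [Fintype R] [IsLocalRing R]
    (hs : 0 < s) (hmax : IsLocalRing.maximalIdeal R = Ideal.span {π})
    (hnil : π ^ s = 0) (hnil' : π ^ (s-1) ≠ 0)
    (hq : Nat.card (IsLocalRing.ResidueField R) = q)
    (hV : IsCompleteResidues π V) :
    ∀ n (M : Submodule R (Fin m → R)),
      Nat.card M ≤ q ^ n * Nat.card (Submodule.map (pmulMap π (Fin m → R)) M) →
      ∃ A : Matrix (Fin n) (Fin m) R, IsRCF π s V A ∧ rowSpan R A = M := by
  intro n
  induction n with
  | zero =>
    intro M hM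
    have hle : Submodule.map (pmulMap π (Fin m → R)) M ≤ M := by
      rintro x ⟨y, hy, rfl⟩
      exact M.smul_mem π hy
    have heq : Submodule.map (pmulMap π (Fin m → R)) M = M := by
      apply SetLike.ext'
      apply Set.eq_of_subset_of_ncard_le (SetLike.coe_subset_coe.mpr hle)
      rw [← Nat.card_coe_set_eq, ← Nat.card_coe_set_eq]
      have hM0 := hM
      simp only [pow_zero, one_mul] at hM0
      exact hM0
    have hiter : ∀ k : ℕ, ∀ x ∈ M, ∃ y ∈ M, x = π ^ k • y := by
      intro k
      induction k with
      | zero => exact fun x hx => ⟨x, hx, by simp⟩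
      | succ k ihk =>
        intro x hx
        rw [← heq] at hx
        obtain ⟨y, hy, rfl⟩ := hx
        obtain ⟨z, hz, rfl⟩ := ihk y hy
        refine ⟨z, hz, ?_⟩
        show π • (π ^ k • z) = π ^ (k+1) • z
        rw [smul_smul, ← pow_succ']
    have hbot : M = ⊥ := by
      rw [Submodule.eq_bot_iff]
      intro x hx
      obtain ⟨y, -, rfl⟩ := hiter s x hx
      rw [hnil, zero_smul]
    exact ⟨0, isRCF_zero, by rw [rowSpan_zero, hbot]⟩
  | succ n ih =>
    intro M hM
    rcases eq_or_ne M ⊥ with rfl | hMne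
    · exact ⟨0, isRCF_zero, rowSpan_zero⟩
    obtain ⟨d, j, v, hd, hv, hvj, hPd, hcol⟩ := exists_pivot_data hs hmax hnil M hMne
    set proj_j : (Fin m → R) →ₗ[R] R := LinearMap.proj j with hproj
    set M' := M ⊓ LinearMap.ker proj_j with hM'
    have hM'le : M' ≤ M := inf_le_left
    have hM'j : ∀ w ∈ M', w j = 0 := fun w hw => hw.2
    have hdecomp : ∀ w ∈ M, ∃ e : R, w - e • v ∈ M' ∧ w j = e * π ^ d := by
      intro w hw
      obtain ⟨e, he⟩ := Ideal.mem_span_singleton'.mp (hPd w hw j)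
      refine ⟨e, ⟨M.sub_mem hw (M.smul_mem e hv), ?_⟩, he.symm⟩
      show w j - e * (v j) = 0
      rw [hvj, ← he, sub_self]
    have hπsd : π ^ (s-d) • v = 0 := smul_row_zero hnil (le_of_lt hd) (fun k => hPd v hv k)
    -- cardinality of M
    have hkerM : Nat.card (LinearMap.ker (proj_j.comp M.subtype)) = Nat.card M' := by
      rw [LinearMap.ker_comp]
      have h1 : Submodule.comap M.subtype (LinearMap.ker proj_j) =
          Submodule.comap M.subtype M' := by
        rw [hM', Submodule.comap_inf, Submodule.comap_subtype_self, top_inf_eq]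
      rw [h1]
      exact Nat.card_congr (Submodule.comapSubtypeEquivOfLe hM'le).toEquiv
    have hrangeM : LinearMap.range (proj_j.comp M.subtype) = Ideal.span {π ^ d} := by
      apply le_antisymm
      · rintro x ⟨⟨w, hw⟩, rfl⟩
        exact hPd w hw j
      · rw [Ideal.span_singleton_le_iff_mem]
        exact ⟨⟨v, hv⟩, hvj⟩
    have hcardM : Nat.card M = Nat.card M' * q ^ (s - d) := by
      have h := card_eq_ker_mul_range (proj_j.comp M.subtype)
      rw [hkerM, hrangeM, cardI_pow_eq hs hmax hnil hnil' hq d (le_of_lt hd)] at h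
      exact h
    -- cardinality of πM
    set N := Submodule.map (pmulMap π (Fin m → R)) M with hN
    have hNK : N ⊓ LinearMap.ker proj_j = Submodule.map (pmulMap π (Fin m → R)) M' := by
      apply le_antisymm
      · rintro x ⟨hxN, hxj⟩
        obtain ⟨u, hu, rfl⟩ := hxN
        obtain ⟨e, hu', huj⟩ := hdecomp u hu
        have hxj' : π * u j = 0 := hxj
        have hann : π * e ∈ Ideal.span {π ^ (s - d)} := by
          apply (ann_pow hmax hnil hnil' (le_of_lt hd)).mp
          rw [show π ^ d * (π * e) = π * (e * π ^ d) from by ring, ← huj]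
          exact hxj'
        obtain ⟨b, hb⟩ := Ideal.mem_span_singleton'.mp hann
        have hsplit : pmulMap π (Fin m → R) u = pmulMap π (Fin m → R) (u - e • v) := by
          rw [pmulMap_apply, pmulMap_apply]
          have h2 : u = e • v + (u - e • v) := by abel
          nth_rewrite 1 [h2]
          rw [smul_add]
          have h3 : π • (e • v) = 0 := by
            rw [smul_smul, show π * e = b * π ^ (s-d) from by rw [← hb], ← smul_smul,
              hπsd, smul_zero]
          rw [h3, zero_add]
        rw [hsplit]
        exact ⟨u - e • v, hu', rfl⟩
      · rintro x ⟨u', hu', rfl⟩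
        constructor
        · exact ⟨u', hM'le hu', rfl⟩
        · show π * u' j = 0
          rw [hM'j u' hu', mul_zero]
    have hKle : Submodule.map (pmulMap π (Fin m → R)) M' ≤ N := hNK ▸ inf_le_left
    have hkerN : Nat.card (LinearMap.ker (proj_j.comp N.subtype)) =
        Nat.card (Submodule.map (pmulMap π (Fin m → R)) M') := by
      rw [LinearMap.ker_comp]
      have h1 : Submodule.comap N.subtype (LinearMap.ker proj_j) =
          Submodule.comap N.subtype (Submodule.map (pmulMap π (Fin m → R)) M') := by
        rw [← hNK, Submodule.comap_inf, Submodule.comap_subtype_self, top_inf_eq]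
      rw [h1]
      exact Nat.card_congr (Submodule.comapSubtypeEquivOfLe hKle).toEquiv
    have hrangeN : LinearMap.range (proj_j.comp N.subtype) = Ideal.span {π ^ (d+1)} := by
      apply le_antisymm
      · rintro x ⟨⟨w, hw⟩, rfl⟩
        obtain ⟨u, hu, rfl⟩ := hw
        obtain ⟨e, he⟩ := Ideal.mem_span_singleton'.mp (hPd u hu j)
        refine Ideal.mem_span_singleton'.mpr ⟨e, ?_⟩
        show e * π ^ (d+1) = π * u j
        rw [← he, pow_succ]
        ring
      · rw [Ideal.span_singleton_le_iff_mem]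
        refine ⟨⟨pmulMap π (Fin m → R) v, ⟨v, hv, rfl⟩⟩, ?_⟩
        show π * v j = π ^ (d+1)
        rw [hvj, pow_succ]
        ring
    have hcardN : Nat.card N =
        Nat.card (Submodule.map (pmulMap π (Fin m → R)) M') * q ^ (s - d - 1) := by
      have h := card_eq_ker_mul_range (proj_j.comp N.subtype)
      rw [hkerN, hrangeN, cardI_pow_eq hs hmax hnil hnil' hq (d+1) hd] at h
      rw [h]
      congr 1
    -- smallness descends
    have hqpos : 0 < q := q_pos hq
    have hsmall' : Nat.card M' ≤ q ^ n *
        Nat.card (Submodule.map (pmulMap π (Fin m → R)) M') := by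
      have h1 : Nat.card M' * q ^ (s-d) ≤
          (q ^ n * Nat.card (Submodule.map (pmulMap π (Fin m → R)) M')) * q ^ (s-d) := by
        calc Nat.card M' * q ^ (s-d) = Nat.card M := hcardM.symm
          _ ≤ q ^ (n+1) * Nat.card N := hM
          _ = q ^ (n+1) * (Nat.card (Submodule.map (pmulMap π (Fin m → R)) M') *
                q ^ (s-d-1)) := by rw [hcardN]
          _ = (q ^ n * Nat.card (Submodule.map (pmulMap π (Fin m → R)) M')) * q ^ (s-d) := by
              obtain ⟨e, he⟩ : ∃ e, s - d = e + 1 := ⟨s - d - 1, by omega⟩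
              rw [show s - d - 1 = e by omega, he, pow_succ q n, pow_succ]
              ring
      exact Nat.le_of_mul_le_mul_right h1 (pow_pos hqpos _)
    obtain ⟨A', hA'rcf, hA'span⟩ := ih M' hsmall'
    have hrow : ∀ k, A' k ∈ M' := fun k => hA'span ▸ row_mem_rowSpan A' k
    obtain ⟨c, hc⟩ := reduce hmax hnil hnil' hV n A' hA'rcf v
    set v'' := v - ∑ i, c i • A' i with hv''def
    have hsumM' : ∑ i, c i • A' i ∈ M' :=
      Submodule.sum_mem _ fun i _ => Submodule.smul_mem _ _ (hrow i)
    have hv''M : v'' ∈ M := M.sub_mem hv (hM'le hsumM')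
    have hdiff : v - v'' ∈ M' := by
      rw [hv''def, sub_sub_cancel]
      exact hsumM'
    have hv''j : v'' j = π ^ d := by
      rw [hv''def]
      show v j - (∑ i, c i • A' i) j = π ^ d
      rw [hvj, hM'j _ hsumM', sub_zero]
    have hv''ne : v'' ≠ 0 := by
      intro h
      apply pow_ne_zero_of_lt hnil' hd
      rw [← hv''j, h]
      rfl
    have hdegj : degR π s (v'' j) = d := by
      rw [hv''j, degR_pow hmax hnil hnil' hd]
    have hv''piv : IsPivotIdx π s v'' j := by
      constructor
      · intro k
        rw [hdegj]
        exact (mem_span_iff_le_degR hmax hnil hnil' (le_of_lt hd)).mp (hPd v'' hv''M k)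
      · intro k hk
        rw [hdegj]
        have := (mem_span_iff_le_degR hmax hnil hnil' (show d+1 ≤ s by omega)).mp
          (hcol v'' hv''M k hk)
        omega
    set A : Matrix (Fin (n+1)) (Fin m) R :=
      Matrix.of (Fin.cons (α := fun _ => Fin m → R) v'' (fun k => A' k)) with hAdef
    have hA0 : A 0 = v'' := rfl
    have hAsucc : ∀ k : Fin n, A k.succ = A' k := by
      intro k
      show Fin.cons (α := fun _ => Fin m → R) v'' (fun k => A' k) k.succ = A' k
      simp
    -- row span
    have hspan : rowSpan R A = M := by
      have h1 : rowSpan R A = Submodule.span R (insert v'' (Set.range fun k => A' k)) := by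
        rw [rowSpan]
        congr 1
        show Set.range (Fin.cons v'' fun k => A' k) = _
        exact Fin.range_cons _ _
      have hA'span' : Submodule.span R (Set.range fun k => A' k) = M' := hA'span
      rw [h1, Submodule.span_insert, hA'span']
      apply le_antisymm
      · apply sup_le
        · rw [Submodule.span_singleton_le_iff_mem]
          exact hv''M
        · exact hM'le
      · intro w hw
        obtain ⟨e, hwM', hwj⟩ := hdecomp w hw
        have hw2 : w = e • v'' + (e • (v - v'') + (w - e • v)) := by
          have hmid : e • v'' + e • (v - v'') = e • v := by
            rw [← smul_add]
            congr 1
            abel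
          rw [← add_assoc, hmid]
          abel
        rw [hw2]
        refine Submodule.add_mem _ (Submodule.mem_sup_left ?_) (Submodule.mem_sup_right ?_)
        · exact Submodule.smul_mem _ _ (Submodule.mem_span_singleton_self v'')
        · exact Submodule.add_mem _ (Submodule.smul_mem _ _ hdiff) hwM'
    refine ⟨A, ?_, hspan⟩
    -- IsRCF
    have hd1s : d + 1 ≤ s := hd
    have hrowM : ∀ i : Fin (n+1), A i ∈ M := by
      intro i
      refine Fin.cases ?_ ?_ i
      · exact hv''M
      · intro k; rw [hAsucc k]; exact hM'le (hrow k)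
    have hpivsucc : ∀ (k : Fin n) (jk : Fin m), A' k ≠ 0 → IsPivotIdx π s (A' k) jk →
        d ≤ degR π s (A' k jk) ∧ (degR π s (A' k jk) = d → j < jk) := by
      intro k jk hne hpk
      have hmem : A' k jk ∈ Ideal.span {π ^ d} := hPd _ (hM'le (hrow k)) jk
      have hle' : d ≤ degR π s (A' k jk) :=
        (mem_span_iff_le_degR hmax hnil hnil' (le_of_lt hd)).mp hmem
      refine ⟨hle', ?_⟩
      intro heq
      rcases lt_trichotomy jk j with hlt | hEq | hgt
      · exfalso
        have := (mem_span_iff_le_degR hmax hnil hnil' hd1s).mp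
          (hcol _ (hM'le (hrow k)) jk hlt)
        omega
      · exfalso
        have hz : A' k jk = 0 := by rw [hEq]; exact hM'j _ (hrow k)
        rw [hz, degR_zero] at heq
        omega
      · exact hgt
    refine ⟨?_, ?_, ?_, ?_⟩
    · -- (1)
      intro i i' hii' hne'
      rcases Fin.eq_zero_or_eq_succ i with rfl | ⟨k, rfl⟩
      · rw [hA0]; exact hv''ne
      rcases Fin.eq_zero_or_eq_succ i' with rfl | ⟨k', rfl⟩
      · exact absurd hii' (Fin.not_lt_zero _)
      rw [hAsucc] at hne' ⊢
      exact hA'rcf.1 k k' (Fin.succ_lt_succ_iff.mp hii') hne'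
    · -- (2)
      intro i i' j1 j2 hii' hne hne' hp hp'
      rcases Fin.eq_zero_or_eq_succ i' with rfl | ⟨k', rfl⟩
      · exact absurd hii' (Fin.not_lt_zero _)
      rcases Fin.eq_zero_or_eq_succ i with rfl | ⟨k, rfl⟩
      · have hj1 : j1 = j := by
          apply pivot_unique (π := π) (s := s) (r := v'') _ hv''piv
          rw [← hA0]; exact hp
        subst hj1
        rw [hAsucc] at hne' hp' ⊢
        have h2 := hpivsucc k' j2 hne' hp'
        have hdeg0 : degR π s (A 0 j1) = d := by rw [hA0]; exact hdegj
        constructor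
        · rw [hdeg0]; exact h2.1
        · intro heq
          rw [hdeg0] at heq
          exact le_of_lt (h2.2 heq.symm)
      · rw [hAsucc] at hne hp
        rw [hAsucc] at hne' hp'
        rw [hAsucc, hAsucc]
        exact hA'rcf.2.1 k k' j1 j2 (Fin.succ_lt_succ_iff.mp hii') hne hne' hp hp'
    · -- (3)
      intro i j1 hne hp
      rcases Fin.eq_zero_or_eq_succ i with rfl | ⟨k, rfl⟩
      · have hj1 : j1 = j := by
          apply pivot_unique (π := π) (s := s) (r := v'') _ hv''piv
          rw [← hA0]; exact hp
        subst hj1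
        rw [hA0, hdegj, hv''j]
        exact ⟨hd, rfl⟩
      · rw [hAsucc] at hne hp ⊢
        exact hA'rcf.2.2.1 k j1 hne hp
    · -- (4)
      intro i j1 hne hp
      rcases Fin.eq_zero_or_eq_succ i with rfl | ⟨k, rfl⟩
      · have hj1 : j1 = j := by
          apply pivot_unique (π := π) (s := s) (r := v'') _ hv''piv
          rw [← hA0]; exact hp
        subst hj1
        constructor
        · intro i' hlt
          rcases Fin.eq_zero_or_eq_succ i' with rfl | ⟨k', rfl⟩
          · exact absurd hlt (lt_irrefl _)
          · rw [hAsucc]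
            exact hM'j _ (hrow k')
        · intro i' hlt
          exact absurd hlt (Fin.not_lt_zero _)
      · rw [hAsucc] at hne hp
        constructor
        · intro i' hlt
          rcases Fin.eq_zero_or_eq_succ i' with rfl | ⟨k', rfl⟩
          · exact absurd hlt (Fin.not_lt_zero _)
          · rw [hAsucc]
            exact (hA'rcf.2.2.2 k j1 hne hp).1 k' (Fin.succ_lt_succ_iff.mp hlt)
        · intro i' hlt
          rcases Fin.eq_zero_or_eq_succ i' with rfl | ⟨k', rfl⟩
          · rw [hA0, hAsucc]
            exact hc k hne j1 hp
          · rw [hAsucc, hAsucc]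
            exact (hA'rcf.2.2.2 k j1 hne hp).2 k' (Fin.succ_lt_succ_iff.mp hlt)

end Exists

section Unique

variable {q s : ℕ} {π : R} {V : Set R} {m : ℕ}

lemma rowSpan_eq_bot {t : ℕ} {A : Matrix (Fin t) (Fin m) R} (h : ∀ i, A i = 0) :
    rowSpan R A = ⊥ := by
  apply le_antisymm _ bot_le
  rw [rowSpan, Submodule.span_le]
  rintro x ⟨i, rfl⟩
  exact (Submodule.mem_bot R).mpr (h i)

lemma top_pivot [IsLocalRing R]
    (hmax : IsLocalRing.maximalIdeal R = Ideal.span {π})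
    (hnil : π ^ s = 0) (hnil' : π ^ (s-1) ≠ 0)
    {n : ℕ} {A : Matrix (Fin (n+1)) (Fin m) R} (hA : IsRCF π s V A)
    {M : Submodule R (Fin m → R)} (hspan : rowSpan R A = M) (hMne : M ≠ ⊥)
    {d : ℕ} {j : Fin m} {v : Fin m → R} (hd : d < s) (hv : v ∈ M) (hvj : v j = π ^ d)
    (hPd : ∀ w ∈ M, ∀ k, w k ∈ Ideal.span {π ^ d})
    (hcol : ∀ w ∈ M, ∀ k, k < j → w k ∈ Ideal.span {π ^ (d+1)}) :
    A 0 ≠ 0 ∧ IsPivotIdx π s (A 0) j ∧ A 0 j = π ^ d := by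
  have hA0ne : A 0 ≠ 0 := by
    intro h0
    exact hMne (hspan ▸ rowSpan_eq_bot (rows_zero_of_first_zero hA h0))
  obtain ⟨j₀, hj₀⟩ := pivot_exists (π := π) (s := s) hA0ne
  obtain ⟨hl₀s, hA0j₀⟩ := hA.2.2.1 0 j₀ hA0ne hj₀
  set l₀ := degR π s (A 0 j₀) with hl₀def
  -- all entries of all rows lie in ⟨π^l₀⟩
  have hrows : ∀ i k, A i k ∈ Ideal.span {π ^ l₀} := by
    intro i k
    rcases eq_or_ne (A i) 0 with hzero | hne
    · rw [show A i k = 0 from by rw [hzero]; rfl]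
      exact Submodule.zero_mem _
    rcases eq_or_ne i 0 with rfl | hi0
    · exact (mem_span_iff_le_degR hmax hnil hnil' (le_of_lt hl₀s)).mpr (hj₀.1 k)
    · obtain ⟨ji, hji⟩ := pivot_exists (π := π) (s := s) hne
      have h2 := hA.2.1 0 i j₀ ji (Fin.pos_of_ne_zero hi0) hA0ne hne hj₀ hji
      exact (mem_span_iff_le_degR hmax hnil hnil' (le_of_lt hl₀s)).mpr
        (le_trans h2.1 (hji.1 k))
  have hMl₀ : ∀ w ∈ M, ∀ k, w k ∈ Ideal.span {π ^ l₀} := by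
    intro w hw k
    rw [← hspan] at hw
    have hle : rowSpan R A ≤ Submodule.pi Set.univ fun _ : Fin m =>
        Ideal.span {π ^ l₀} := by
      rw [rowSpan, Submodule.span_le]
      rintro x ⟨i, rfl⟩
      exact fun k' _ => hrows i k'
    exact hle hw k (Set.mem_univ k)
  have hA0M : A 0 ∈ M := hspan ▸ row_mem_rowSpan A 0
  have hld : l₀ = d := by
    have h1 : l₀ ≤ d := by
      have := hMl₀ v hv j
      rw [hvj] at this
      exact (pow_mem_span_pow_iff hnil hnil' hd (le_of_lt hl₀s)).mp this
    have h2 : d ≤ l₀ := by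
      have := hPd (A 0) hA0M j₀
      rw [hA0j₀] at this
      exact (pow_mem_span_pow_iff hnil hnil' hl₀s (le_of_lt hd)).mp this
    omega
  have hd1s : d + 1 ≤ s := hd
  have hjj₀ : j₀ = j := by
    rcases lt_trichotomy j₀ j with hlt | hEq | hgt
    · exfalso
      have := hcol (A 0) hA0M j₀ hlt
      rw [hA0j₀] at this
      have := (pow_mem_span_pow_iff hnil hnil' hl₀s hd1s).mp this
      omega
    · exact hEq
    · exfalso
      -- j < j₀ : every row has column-j entry in ⟨π^(d+1)⟩
      have hcolj : ∀ i, A i j ∈ Ideal.span {π ^ (d+1)} := by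
        intro i
        rcases eq_or_ne (A i) 0 with hzero | hne
        · rw [show A i j = 0 from by rw [hzero]; rfl]
          exact Submodule.zero_mem _
        rcases eq_or_ne i 0 with rfl | hi0
        · have := hj₀.2 j hgt
          exact (mem_span_iff_le_degR hmax hnil hnil' hd1s).mpr (by omega)
        · obtain ⟨ji, hji⟩ := pivot_exists (π := π) (s := s) hne
          have h2 := hA.2.1 0 i j₀ ji (Fin.pos_of_ne_zero hi0) hA0ne hne hj₀ hji
          rcases eq_or_lt_of_le h2.1 with heq | hlt'
          · have hj₀ji : j₀ ≤ ji := h2.2 heq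
            have hjlt : j < ji := lt_of_lt_of_le hgt hj₀ji
            have h4 := hji.2 j hjlt
            exact (mem_span_iff_le_degR hmax hnil hnil' hd1s).mpr (by omega)
          · have h5 := hji.1 j
            exact (mem_span_iff_le_degR hmax hnil hnil' hd1s).mpr (by omega)
      have hvmem : v j ∈ Ideal.span {π ^ (d+1)} := by
        have hle : rowSpan R A ≤ Submodule.comap (LinearMap.proj (R := R)
            (φ := fun _ : Fin m => R) j) (Ideal.span {π ^ (d+1)}) := by
          rw [rowSpan, Submodule.span_le]
          rintro x ⟨i, rfl⟩
          exact hcolj i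
        rw [← hspan] at hv
        exact hle hv
      rw [hvj] at hvmem
      have := (pow_mem_span_pow_iff hnil hnil' hd hd1s).mp hvmem
      omega
  subst hjj₀
  rw [← hld]
  exact ⟨hA0ne, hj₀, hA0j₀⟩

theorem rcf_unique [IsLocalRing R]
    (hs : 0 < s) (hmax : IsLocalRing.maximalIdeal R = Ideal.span {π})
    (hnil : π ^ s = 0) (hnil' : π ^ (s-1) ≠ 0)
    (hV : IsCompleteResidues π V) :
    ∀ n (A B : Matrix (Fin n) (Fin m) R), IsRCF π s V A → IsRCF π s V B →
      rowSpan R A = rowSpan R B → A = B := by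
  intro n
  induction n with
  | zero =>
    intro A B _ _ _
    funext i
    exact i.elim0
  | succ n ih =>
    intro A B hA hB hspan
    set M := rowSpan R A with hMdef
    have hMB : rowSpan R B = M := hspan.symm
    rcases eq_or_ne M ⊥ with hbot | hMne
    · funext i
      have h1 : A i = 0 := (Submodule.mem_bot R).mp (hbot ▸ row_mem_rowSpan A i)
      have h2 : B i = 0 := (Submodule.mem_bot R).mp (hbot ▸ hMB ▸ row_mem_rowSpan B i)
      rw [h1, h2]
    obtain ⟨d, j, v, hd, hv, hvj, hPd, hcol⟩ := exists_pivot_data hs hmax hnil M hMne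
    obtain ⟨hA0ne, hApiv, hA0j⟩ :=
      top_pivot hmax hnil hnil' hA rfl hMne hd hv hvj hPd hcol
    obtain ⟨hB0ne, hBpiv, hB0j⟩ :=
      top_pivot hmax hnil hnil' hB hMB hMne hd hv hvj hPd hcol
    set proj_j : (Fin m → R) →ₗ[R] R := LinearMap.proj j with hproj
    set M' := M ⊓ LinearMap.ker proj_j with hM'
    set A' : Matrix (Fin n) (Fin m) R := Matrix.of fun k : Fin n => A k.succ with hA'def
    set B' : Matrix (Fin n) (Fin m) R := Matrix.of fun k : Fin n => B k.succ with hB'def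
    have htailspan : ∀ (C : Matrix (Fin (n+1)) (Fin m) R), IsRCF π s V C →
        rowSpan R C = M → C 0 ≠ 0 → IsPivotIdx π s (C 0) j → C 0 j = π ^ d →
        rowSpan R (Matrix.of fun k : Fin n => C k.succ) = M' := by
      intro C hC hCspan hC0ne hCpiv hC0j
      apply le_antisymm
      · rw [rowSpan, Submodule.span_le]
        rintro x ⟨k, rfl⟩
        refine ⟨hCspan ▸ row_mem_rowSpan C k.succ, ?_⟩
        show C k.succ j = 0
        exact (hC.2.2.2 0 j hC0ne hCpiv).1 k.succ (Fin.succ_pos k)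
      · intro w hw
        have hwM : w ∈ rowSpan R C := hCspan.symm ▸ hw.1
        obtain ⟨c, hc⟩ := Submodule.mem_span_range_iff_exists_fun R |>.mp hwM
        have hwj : w j = 0 := hw.2
        have hzero : ∀ k : Fin n, C k.succ j = 0 :=
          fun k => (hC.2.2.2 0 j hC0ne hCpiv).1 k.succ (Fin.succ_pos k)
        have hcj : c 0 * π ^ d = 0 := by
          have h1 : (∑ i, c i • C i) j = c 0 * C 0 j + ∑ k : Fin n, c k.succ * C k.succ j := by
            rw [Fin.sum_univ_succ]
            simp [Finset.sum_apply]
          rw [hc] at h1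
          rw [hwj, hC0j] at h1
          rw [Finset.sum_eq_zero (fun k _ => by rw [hzero k, mul_zero]), add_zero] at h1
          exact h1.symm
        have hc0 : c 0 • C 0 = 0 := by
          obtain ⟨b, hb⟩ := Ideal.mem_span_singleton'.mp
            ((ann_pow hmax hnil hnil' (le_of_lt hd)).mp
              (by rw [mul_comm] at hcj; exact hcj))
          rw [← hb, ← smul_smul]
          rw [smul_row_zero hnil (le_of_lt hd)
            (fun k => hPd (C 0) (hCspan ▸ row_mem_rowSpan C 0) k), smul_zero]
        apply Submodule.mem_span_range_iff_exists_fun R |>.mpr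
        refine ⟨fun k => c k.succ, ?_⟩
        have h2 : w = c 0 • C 0 + ∑ k : Fin n, c k.succ • C k.succ := by
          rw [← hc, Fin.sum_univ_succ]
        rw [h2, hc0, zero_add]
        rfl
    have hA'span : rowSpan R A' = M' := htailspan A hA rfl hA0ne hApiv hA0j
    have hB'span : rowSpan R B' = M' := htailspan B hB hMB hB0ne hBpiv hB0j
    have htails : A' = B' :=
      ih A' B' (isRCF_tail hA) (isRCF_tail hB) (by rw [hA'span, hB'span])
    have htop : A 0 = B 0 := by
      by_contra hne
      have hxM' : A 0 - B 0 ∈ M' := by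
        refine ⟨M.sub_mem (row_mem_rowSpan A 0) (hMB ▸ row_mem_rowSpan B 0), ?_⟩
        show A 0 j - B 0 j = 0
        rw [hA0j, hB0j, sub_self]
      rw [← hA'span] at hxM'
      obtain ⟨c, hc⟩ := Submodule.mem_span_range_iff_exists_fun R |>.mp hxM'
      classical
      set S := Finset.univ.filter (fun k : Fin n => c k • A' k ≠ 0) with hS
      have hSne : S.Nonempty := by
        by_contra hSe
        rw [Finset.not_nonempty_iff_eq_empty] at hSe
        apply sub_ne_zero.mpr hne
        rw [← hc]
        apply Finset.sum_eq_zero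
        intro k _
        by_contra hk
        have : k ∈ S := by rw [hS]; simp [hk]
        rw [hSe] at this
        exact absurd this (Finset.notMem_empty k)
      set k₀ := S.min' hSne with hk₀def
      have hk₀S : k₀ ∈ S := S.min'_mem hSne
      have hk₀ : c k₀ • A' k₀ ≠ 0 := (Finset.mem_filter.mp hk₀S).2
      have hA'k₀ne : A' k₀ ≠ 0 := by
        intro h
        apply hk₀
        rw [h, smul_zero]
      obtain ⟨j', hpj'⟩ := pivot_exists (π := π) (s := s) hA'k₀ne
      obtain ⟨hl's, hpeq⟩ := (isRCF_tail hA).2.2.1 k₀ j' hA'k₀ne hpj'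
      set l' := degR π s (A' k₀ j') with hl'def
      have hxj' : (A 0 - B 0) j' = c k₀ * π ^ l' := by
        rw [← hc]
        have h1 : (∑ k, c k • A' k) j' = ∑ k, c k * A' k j' := by
          rw [Finset.sum_apply]
          rfl
        rw [h1]
        rw [Finset.sum_eq_single k₀]
        · rw [show A' k₀ j' = π ^ l' from hpeq]
        · intro b _ hbne
          rcases lt_or_gt_of_ne hbne with hlt | hgt
          · have hbS : b ∉ S := fun hbS => absurd (S.min'_le b hbS) (not_le.mpr hlt)
            have : c b • A' b = 0 := by
              by_contra hcon
              exact hbS (by rw [hS]; simp [hcon])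
            calc c b * A' b j' = (c b • A' b) j' := rfl
              _ = 0 := by rw [this]; rfl
          · have hz := (isRCF_tail hA).2.2.2 k₀ j' hA'k₀ne hpj' |>.1 b hgt
            rw [show A' b j' = (0:R) from hz, mul_zero]
        · intro hk₀'
          exact absurd (Finset.mem_univ k₀) hk₀'
      have hcπne : c k₀ * π ^ l' ≠ 0 := by
        intro h0
        apply hk₀
        obtain ⟨b, hb⟩ := Ideal.mem_span_singleton'.mp
          ((ann_pow hmax hnil hnil' (le_of_lt hl's)).mp (by rw [mul_comm] at h0; exact h0))
        rw [← hb, ← smul_smul]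
        rw [smul_row_zero hnil (le_of_lt hl's) (fun k =>
          (mem_span_iff_le_degR hmax hnil hnil' (le_of_lt hl's)).mpr (hpj'.1 k)), smul_zero]
      have hAres : A 0 j' ∈ residueSet π V l' := by
        have := (hA.2.2.2 k₀.succ j' hA'k₀ne hpj').2 0 (Fin.succ_pos k₀)
        exact this
      have hBres : B 0 j' ∈ residueSet π V l' := by
        have hBk : B k₀.succ = A' k₀ := (congrFun htails k₀).symm
        have hBne : B k₀.succ ≠ 0 := by rw [hBk]; exact hA'k₀ne
        have hBpv : IsPivotIdx π s (B k₀.succ) j' := by rw [hBk]; exact hpj'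
        have h1 := (hB.2.2.2 k₀.succ j' hBne hBpv).2 0 (Fin.succ_pos k₀)
        rw [hBk] at h1
        exact h1
      have heq0 : A 0 j' = B 0 j' := by
        apply residue_unique hmax hnil hnil' hV l' (le_of_lt hl's) _ _ hAres hBres
        rw [show A 0 j' - B 0 j' = (A 0 - B 0) j' from rfl, hxj']
        exact Ideal.mem_span_singleton'.mpr ⟨c k₀, rfl⟩
      apply hcπne
      rw [← hxj', show (A 0 - B 0) j' = A 0 j' - B 0 j' from rfl, heq0, sub_self]
    funext i
    rcases Fin.eq_zero_or_eq_succ i with rfl | ⟨k, rfl⟩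
    · exact htop
    · have h1 : A k.succ = A' k := rfl
      have h2 : B k.succ = B' k := rfl
      rw [h1, h2, htails]

end Unique

end RCFProof

/-- The map sending a matrix to its row span is a bijection between row canonical
forms in `T_κ(R^(n×μ))` and submodules of `R^μ` of shape `κ`; in particular the two
sets have the same cardinality. -/
theorem rcf_rowSpan_bijOn {R : Type*} [CommRing R] [Fintype R] [IsLocalRing R] [IsPrincipalIdealRing R]
    (q s : ℕ) (hs : 0 < s) (π : R)
    (hmax : IsLocalRing.maximalIdeal R = Ideal.span {π})
    (hnil : π ^ s = 0) (hnil' : π ^ (s - 1) ≠ 0)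
    (hq : Nat.card (IsLocalRing.ResidueField R) = q)
    (V : Set R) (hV : IsCompleteResidues π V)
    (n : ℕ) (μ κ : Fin s → ℕ) (hμ : Monotone μ) (hκ : Monotone κ)
    (hκn : ∀ i, κ i ≤ n) (hκμ : ∀ i, κ i ≤ μ i) :
    Set.BijOn (fun A : Matrix (Fin n) (Fin (shapeLast μ)) R => rowSpan R A)
      {A | IsRCF π s V A ∧ (∀ i, A i ∈ shapeModule R π μ) ∧
        HasShape R π κ ↥(rowSpan R A)}
      {M : Submodule R (Fin (shapeLast μ) → R) | M ≤ shapeModule R π μ ∧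
        HasShape R π κ ↥M} ∧
    Nat.card {A : Matrix (Fin n) (Fin (shapeLast μ)) R | IsRCF π s V A ∧
        (∀ i, A i ∈ shapeModule R π μ) ∧ HasShape R π κ ↥(rowSpan R A)} =
      Nat.card {M : Submodule R (Fin (shapeLast μ) → R) | M ≤ shapeModule R π μ ∧
        HasShape R π κ ↥M} := by
  classical
  have hbij : Set.BijOn (fun A : Matrix (Fin n) (Fin (shapeLast μ)) R => rowSpan R A)
      {A | IsRCF π s V A ∧ (∀ i, A i ∈ shapeModule R π μ) ∧
        HasShape R π κ ↥(rowSpan R A)}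
      {M : Submodule R (Fin (shapeLast μ) → R) | M ≤ shapeModule R π μ ∧
        HasShape R π κ ↥M} := by
    refine ⟨?_, ?_, ?_⟩
    · rintro A ⟨hrcf, hrows, hshape⟩
      refine ⟨?_, hshape⟩
      apply Submodule.span_le.mpr
      rintro x ⟨i, rfl⟩
      exact hrows i
    · rintro A ⟨hArcf, -, -⟩ B ⟨hBrcf, -, -⟩ heq
      exact RCFProof.rcf_unique hs hmax hnil hnil' hV n A B hArcf hBrcf heq
    · rintro M ⟨hle, hshape⟩
      have hsmall := RCFProof.shape_smallness hs hmax hnil hnil' hq hκn M hshape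
      obtain ⟨A, hArcf, hAspan⟩ :=
        RCFProof.rcf_exists hs hmax hnil hnil' hq hV n M hsmall
      refine ⟨A, ⟨hArcf, ?_, ?_⟩, hAspan⟩
      · intro i
        exact hle (hAspan ▸ RCFProof.row_mem_rowSpan A i)
      · rw [hAspan]
        exact hshape
  exact ⟨hbij, Nat.card_congr (hbij.equiv _)⟩
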